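/- Let ℬ be a category equipped with a factorization system (ℒ, ℛ) and let 𝒜 be a class of objects of ℬ with the gliding property relative to ℛ. Then the (non-full) subcategory 𝒜^ℛ of ℬ, whose objects are the objects in 𝒜 and whose morphisms are the morphisms of ℛ between them, includes into ℬ via a functor that is stable and relatively full and faithful; the candidates for this inclusion are exactly the morphisms of ℒ whose codomain lies in 𝒜, and the stable factorization of f : B → A (A in 𝒜) is its (ℒ, ℛ)-factorization. -/

import Mathlib

open CategoryTheory CategoryTheory.Limits

universe v u₁

namespace Diers

variable {𝒞 : Type u₁} [Category.{v} 𝒞]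

/-- `l` is *orthogonal* to `r` (`l ⊥ r`) if every commutative square `u ≫ r = l ≫ v`
admits a unique diagonal filler `d` with `l ≫ d = u` and `d ≫ r = v`. -/
def Orthogonal {A B X Y : 𝒞} (l : A ⟶ B) (r : X ⟶ Y) : Prop :=
  ∀ (u : A ⟶ X) (v : B ⟶ Y), u ≫ r = l ≫ v → ∃! d : B ⟶ X, l ≫ d = u ∧ d ≫ r = v

/-- An *orthogonality structure* `(ℒ, ℛ)` on `𝒞`: two classes of morphisms with
`ℒ = ^⊥ℛ` (the morphisms left orthogonal to every member of `ℛ`) and `ℛ = ℒ^⊥`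
(the morphisms right orthogonal to every member of `ℒ`). -/
structure OrthStructure (𝒞 : Type u₁) [Category.{v} 𝒞] where
  IsL : MorphismProperty 𝒞
  IsR : MorphismProperty 𝒞
  isL_iff : ∀ {A B : 𝒞} (l : A ⟶ B),
      IsL l ↔ ∀ {X Y : 𝒞} (r : X ⟶ Y), IsR r → Orthogonal l r
  isR_iff : ∀ {X Y : 𝒞} (r : X ⟶ Y),
      IsR r ↔ ∀ {A B : 𝒞} (l : A ⟶ B), IsL l → Orthogonal l r

/-- A *factorization system* `(ℒ, ℛ)`: an orthogonality structure in which every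
morphism factors as a left map followed by a right map. -/
structure FactorizationSystem (𝒞 : Type u₁) [Category.{v} 𝒞] extends OrthStructure 𝒞 where
  factor : ∀ {X Y : 𝒞} (f : X ⟶ Y),
      ∃ (Z : 𝒞) (l : X ⟶ Z) (r : Z ⟶ Y), IsL l ∧ IsR r ∧ l ≫ r = f

theorem OrthStructure.isR_id (S : OrthStructure 𝒞) (X : 𝒞) : S.IsR (𝟙 X) := by
  rw [S.isR_iff]
  intro A B l _ u v huv
  refine ⟨v, ⟨?_, Category.comp_id v⟩, ?_⟩
  · have h : u = l ≫ v := by simpa using huv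
    exact h.symm
  · rintro d ⟨-, hd2⟩
    simpa using hd2

theorem OrthStructure.isR_comp (S : OrthStructure 𝒞) {X Y Z : 𝒞}
    {r₁ : X ⟶ Y} {r₂ : Y ⟶ Z} (h₁ : S.IsR r₁) (h₂ : S.IsR r₂) :
    S.IsR (r₁ ≫ r₂) := by
  rw [S.isR_iff]
  intro A B l hl u v huv
  have o₁ : Orthogonal l r₁ := (S.isR_iff r₁).mp h₁ l hl
  have o₂ : Orthogonal l r₂ := (S.isR_iff r₂).mp h₂ l hl
  obtain ⟨d₂, ⟨hd₂l, hd₂r⟩, hd₂u⟩ :=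
    o₂ (u ≫ r₁) v (by rw [Category.assoc]; exact huv)
  obtain ⟨d₁, ⟨hd₁l, hd₁r⟩, hd₁u⟩ := o₁ u d₂ hd₂l.symm
  refine ⟨d₁, ⟨hd₁l, ?_⟩, ?_⟩
  · rw [← Category.assoc, hd₁r, hd₂r]
  · rintro d ⟨hdl, hdr⟩
    have hdr₁ : d ≫ r₁ = d₂ := by
      refine hd₂u (d ≫ r₁) ⟨?_, ?_⟩
      · rw [← Category.assoc, hdl]
      · rw [Category.assoc]; exact hdr
    exact hd₁u d ⟨hdl, hdr₁⟩

/-- The (non-full) subcategory `𝒜^ℛ` of `𝒞` determined by a class of objects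
`P : 𝒞 → Prop`: its objects are the objects satisfying `P`. -/
structure RSub (S : OrthStructure 𝒞) (P : 𝒞 → Prop) : Type u₁ where
  obj : 𝒞
  prop : P obj

/-- Morphisms of `𝒜^ℛ` are the morphisms of `ℛ` between objects of `𝒜`. -/
instance rSubCategory (S : OrthStructure 𝒞) (P : 𝒞 → Prop) : Category (RSub S P) where
  Hom X Y := {f : X.obj ⟶ Y.obj // S.IsR f}
  id X := ⟨𝟙 X.obj, S.isR_id X.obj⟩
  comp f g := ⟨f.1 ≫ g.1, S.isR_comp f.2 g.2⟩
  id_comp f := Subtype.ext (Category.id_comp f.1)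
  comp_id f := Subtype.ext (Category.comp_id f.1)
  assoc f g h := Subtype.ext (Category.assoc f.1 g.1 h.1)

/-- The inclusion functor `𝒜^ℛ ↪ 𝒞`. -/
def rSubInclusion (S : OrthStructure 𝒞) (P : 𝒞 → Prop) : RSub S P ⥤ 𝒞 where
  obj X := X.obj
  map f := f.1
  map_id _ := rfl
  map_comp _ _ := rfl

/-- A morphism `n : B ⟶ U(A)` is a *candidate* (diagonally universal toward `U`) if for
every `f : B ⟶ U(A₁)`, `v : A₁ ⟶ A₂` and `u : A ⟶ A₂` with `U(v) ∘ f = U(u) ∘ n`,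
there exists a unique `w : A ⟶ A₁` with `v ∘ w = u` and `U(w) ∘ n = f`. -/
def IsCandidate {𝒜' : Type*} [Category 𝒜'] (U : 𝒜' ⥤ 𝒞) {B : 𝒞} {A : 𝒜'}
    (n : B ⟶ U.obj A) : Prop :=
  ∀ {A₁ A₂ : 𝒜'} (f : B ⟶ U.obj A₁) (v : A₁ ⟶ A₂) (u : A ⟶ A₂),
    f ≫ U.map v = n ≫ U.map u → ∃! w : A ⟶ A₁, w ≫ v = u ∧ n ≫ U.map w = f

/-- `U` is *stable* if every morphism `f : B ⟶ U(A)` admits a stable factorization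
`f = U(u_f) ∘ n_f` with `n_f` a candidate. -/
def IsStable {𝒜' : Type*} [Category 𝒜'] (U : 𝒜' ⥤ 𝒞) : Prop :=
  ∀ {B : 𝒞} {A : 𝒜'} (f : B ⟶ U.obj A),
    ∃ (Af : 𝒜') (n : B ⟶ U.obj Af) (u : Af ⟶ A), IsCandidate U n ∧ n ≫ U.map u = f

/-- `U` is *relatively full and faithful* if whenever `U(u₂) ∘ f = U(u₁)` with `u₁, u₂`
morphisms of `𝒜'` and `f` a morphism of `𝒞` between their `U`-images, then `f = U(u)`
for a unique `u`. -/
def RelativelyFullyFaithful {𝒜' : Type*} [Category 𝒜'] (U : 𝒜' ⥤ 𝒞) : Prop :=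
  ∀ {A₁ A₂ A : 𝒜'} (u₁ : A₁ ⟶ A) (u₂ : A₂ ⟶ A) (f : U.obj A₁ ⟶ U.obj A₂),
    f ≫ U.map u₂ = U.map u₁ → ∃! u : A₁ ⟶ A₂, U.map u = f

/-- Left cancellation: if `f ≫ r ∈ ℛ` and `r ∈ ℛ` then `f ∈ ℛ`. -/
theorem OrthStructure.isR_cancel_left (S : OrthStructure 𝒞) {X Y Z : 𝒞}
    {f : X ⟶ Y} {r : Y ⟶ Z} (hfr : S.IsR (f ≫ r)) (hr : S.IsR r) : S.IsR f := by
  rw [S.isR_iff]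
  intro A B l hl a b hab
  have ofr : Orthogonal l (f ≫ r) := (S.isR_iff _).mp hfr l hl
  have orr : Orthogonal l r := (S.isR_iff _).mp hr l hl
  obtain ⟨e, ⟨he1, he2⟩, he3⟩ := ofr a (b ≫ r) (by
    simp only [← Category.assoc]; rw [hab])
  obtain ⟨g, ⟨hg1, hg2⟩, hg3⟩ := orr (a ≫ f) (b ≫ r) (by
    simp only [← Category.assoc]; rw [hab])
  have hbg : b = g := hg3 b ⟨hab.symm, rfl⟩
  have hefg : e ≫ f = g := hg3 (e ≫ f)
    ⟨by rw [← Category.assoc, he1], by rw [Category.assoc]; exact he2⟩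
  refine ⟨e, ⟨he1, by rw [hefg, ← hbg]⟩, ?_⟩
  rintro d ⟨hd1, hd2⟩
  exact he3 d ⟨hd1, by rw [← Category.assoc, hd2]⟩

/-- An `ℒ`-morphism into a `P`-object is a candidate for the inclusion. -/
theorem candidate_of_isL (S : FactorizationSystem 𝒞) (P : 𝒞 → Prop)
    {B : 𝒞} {X : RSub S.toOrthStructure P}
    (n : B ⟶ (rSubInclusion S.toOrthStructure P).obj X) (hn : S.IsL n) :
    IsCandidate (rSubInclusion S.toOrthStructure P) n := by
  intro A₁ A₂ f v u huv
  have o : Orthogonal n v.1 := (S.isL_iff n).mp hn v.1 v.2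
  obtain ⟨d, ⟨hd1, hd2⟩, hd3⟩ := o f u.1 huv
  have hdR : S.IsR d := S.toOrthStructure.isR_cancel_left (hd2 ▸ u.2) v.2
  refine ⟨⟨d, hdR⟩, ⟨Subtype.ext hd2, hd1⟩, ?_⟩
  rintro w ⟨hw1, hw2⟩
  exact Subtype.ext (hd3 w.1 ⟨hw2, congrArg Subtype.val hw1⟩)

/-- **Stable functors from a factorization system and a gliding class of objects.**
Let `𝒞` carry a factorization system `(ℒ, ℛ)` and let `P` be a class of objects of `𝒞`
with the gliding property relative to `ℛ` (`r : B ⟶ A` in `ℛ` and `P A` imply `P B`).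
Then the inclusion `𝒜^ℛ ↪ 𝒞` of the subcategory of `P`-objects and `ℛ`-morphisms is
stable and relatively full and faithful; its candidates are exactly the `ℒ`-morphisms
with codomain in `P`; and the stable factorization of any `f : B ⟶ A` with `P A` is
its `(ℒ, ℛ)`-factorization. -/
theorem stable_inclusion_of_gliding (S : FactorizationSystem 𝒞) (P : 𝒞 → Prop)
    (hP : ∀ {B A : 𝒞} (r : B ⟶ A), S.IsR r → P A → P B) :
    IsStable (rSubInclusion S.toOrthStructure P) ∧
    RelativelyFullyFaithful (rSubInclusion S.toOrthStructure P) ∧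
    (∀ {B : 𝒞} {X : RSub S.toOrthStructure P}
        (n : B ⟶ (rSubInclusion S.toOrthStructure P).obj X),
        IsCandidate (rSubInclusion S.toOrthStructure P) n ↔ S.IsL n) ∧
    (∀ {B : 𝒞} {X : RSub S.toOrthStructure P}
        (f : B ⟶ (rSubInclusion S.toOrthStructure P).obj X)
        {Z : 𝒞} (l : B ⟶ Z) (r : Z ⟶ X.obj),
        S.IsL l → S.IsR r → l ≫ r = f →
        ∃ hZ : P Z,
          IsCandidate (rSubInclusion S.toOrthStructure P) (A := ⟨Z, hZ⟩) l) := by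
  have key : ∀ {B : 𝒞} {X : RSub S.toOrthStructure P}
      (n : B ⟶ (rSubInclusion S.toOrthStructure P).obj X),
      IsCandidate (rSubInclusion S.toOrthStructure P) n ↔ S.IsL n := by
    intro B X n
    refine ⟨?_, candidate_of_isL S P n⟩
    intro hc
    obtain ⟨Z, l, r, hl, hr, hlr⟩ := S.factor n
    have hZ : P Z := hP r hr X.prop
    set Zo : RSub S.toOrthStructure P := ⟨Z, hZ⟩
    set rm : Zo ⟶ X := ⟨r, hr⟩
    have hlc : IsCandidate (rSubInclusion S.toOrthStructure P) (A := Zo) l :=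
      candidate_of_isL S P (X := Zo) l hl
    obtain ⟨w, ⟨hw1, hw2⟩, _⟩ := hc (A₁ := Zo) l rm (𝟙 X)
      (by rw [CategoryTheory.Functor.map_id, Category.comp_id]; exact hlr)
    -- `r ≫ w.1 = 𝟙 Z` via uniqueness in the candidacy of `l`
    obtain ⟨w', hw', hw'u⟩ := hlc (A₁ := Zo) l rm rm rfl
    have h1 : (𝟙 Zo : Zo ⟶ Zo) = w' :=
      hw'u (𝟙 Zo) ⟨Category.id_comp rm, by exact Category.comp_id l⟩
    have h2 : rm ≫ w = w' := by
      refine hw'u (rm ≫ w) ⟨?_, ?_⟩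
      · rw [Category.assoc, hw1, Category.comp_id]
      · show l ≫ (r ≫ w.1) = l
        exact (Category.assoc l r w.1).symm.trans ((congrArg (· ≫ w.1) hlr).trans hw2)
    have hrw : r ≫ w.1 = 𝟙 Z := congrArg Subtype.val (h2.trans h1.symm)
    have hwr : w.1 ≫ r = 𝟙 X.obj := congrArg Subtype.val hw1
    -- now show `n ∈ ℒ` by checking orthogonality against every `r' ∈ ℛ`
    rw [S.isL_iff]
    intro Xr Yr r' hr' a b hab
    have ol : Orthogonal l r' := (S.isL_iff l).mp hl r' hr'
    obtain ⟨d, ⟨hd1, hd2⟩, hd3⟩ := ol a (r ≫ b)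
      (by rw [hab, ← hlr, Category.assoc])
    refine ⟨w.1 ≫ d, ⟨?_, ?_⟩, ?_⟩
    · have e : (r ≫ w.1) ≫ d = d := by rw [hrw, Category.id_comp]
      rw [← hlr, Category.assoc]
      exact (congrArg (l ≫ ·) ((Category.assoc r w.1 d).symm.trans e)).trans hd1
    · exact (Category.assoc _ _ _).trans ((congrArg (w.1 ≫ ·) hd2).trans
        ((Category.assoc w.1 r b).symm.trans ((congrArg (· ≫ b) hwr).trans (Category.id_comp b))))
    · rintro d' ⟨hd'1, hd'2⟩
      have hrd : r ≫ d' = d := by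
        refine hd3 (r ≫ d') ⟨?_, ?_⟩
        · rw [← Category.assoc, hlr]; exact hd'1
        · rw [Category.assoc, hd'2]
      rw [← hrd]
      exact (Category.id_comp d').symm.trans ((congrArg (· ≫ d') hwr).symm.trans (Category.assoc _ _ _))
  refine ⟨?_, ?_, key, ?_⟩
  · intro B A f
    obtain ⟨Z, l, r, hl, hr, hlr⟩ := S.factor f
    have hZ : P Z := hP r hr A.prop
    exact ⟨⟨Z, hZ⟩, l, ⟨r, hr⟩, candidate_of_isL S P (X := ⟨Z, hZ⟩) l hl, hlr⟩
  · intro A₁ A₂ A u₁ u₂ f hf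
    have hfR : S.IsR f :=
      S.toOrthStructure.isR_cancel_left (hf ▸ u₁.2) u₂.2
    exact ⟨⟨f, hfR⟩, rfl, fun u hu => Subtype.ext hu⟩
  · intro B X f Z l r hl hr hlr
    exact ⟨hP r hr X.prop, candidate_of_isL S P (X := ⟨Z, hP r hr X.prop⟩) l hl⟩

end Diers
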